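/- For every θ ∈ ℝ and t < 0 the torus curve satisfies: (i) |∂_θγ(θ,t)|² = ∑_{j=1}^m k_j² r(t)^{2k_j²} (in particular ∂_θγ(θ,t) ≠ 0); (ii) ⟨∂_θ²γ(θ,t), ∂_θγ(θ,t)⟩ = 0; and (iii) ∂_tγ(θ,t) = ∂_θ²γ(θ,t) / |∂_θγ(θ,t)|². Hence γ is an ancient solution of the curve shortening flow: its normal velocity at every point equals the curvature vector of the curve θ ↦ γ(θ,t). -/

import Mathlib

open Real Finset Filter Topology

lemma hasDerivAt_euclidean {ι : Type*} [Fintype ι] {f : ℝ → EuclideanSpace ℝ ι}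
    {v : EuclideanSpace ℝ ι} {x : ℝ}
    (h : ∀ i, HasDerivAt (fun y => f y i) (v i) x) : HasDerivAt f v x := by
  let e : EuclideanSpace ℝ ι ≃L[ℝ] (ι → ℝ) := EuclideanSpace.equiv ι ℝ
  have hp : HasDerivAt (fun y => e (f y)) (e v) x := hasDerivAt_pi.2 h
  have := ((e.symm : (ι → ℝ) →L[ℝ] EuclideanSpace ℝ ι).hasFDerivAt).comp_hasDerivAt x hp
  simpa [e, Function.comp_def] using this

lemma torus_r_hasDerivAt (m : ℕ) (hm : 1 ≤ m) (k : Fin m → ℕ) (hkpos : ∀ j, 0 < k j)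
    (r : ℝ → ℝ)
    (hr : ∀ t < (0:ℝ), 0 < r t ∧ ∑ j : Fin m, (r t) ^ (2 * (k j) ^ 2) = -2 * t)
    (t : ℝ) (ht : t < 0) :
    HasDerivAt r (-(∑ j : Fin m, (k j : ℝ)^2 * (r t) ^ (2*(k j)^2 - 1))⁻¹) t := by
  haveI : Nonempty (Fin m) := ⟨⟨0, hm⟩⟩
  set F : ℝ → ℝ := fun ρ => ∑ j : Fin m, ρ ^ (2*(k j)^2) with hF
  have hFmono : StrictMonoOn F (Set.Ici 0) := by
    intro a ha b hb hab
    apply Finset.sum_lt_sum_of_nonempty Finset.univ_nonempty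
    intro j _
    exact pow_lt_pow_left₀ hab ha (by have := hkpos j; positivity)
  obtain ⟨hρ0, hsum⟩ := hr t ht
  have hsumF : F (r t) = -2 * t := hsum
  -- continuity of r at t
  have hcont : ContinuousAt r t := by
    rw [Metric.continuousAt_iff]
    intro ε hε
    set ε' : ℝ := min ε (r t / 2) with hε'def
    have hε'pos : 0 < ε' := lt_min hε (by linarith)
    have hε'le : ε' ≤ r t / 2 := min_le_right _ _
    have h1 : (0:ℝ) ≤ r t - ε' := by linarith
    have hlt : F (r t - ε') < -2*t := by
      rw [← hsumF]
      exact hFmono h1 (le_of_lt hρ0) (by linarith)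
    have hgt : -2*t < F (r t + ε') := by
      rw [← hsumF]
      exact hFmono (le_of_lt hρ0) (Set.mem_Ici.2 (by linarith)) (by linarith)
    refine ⟨min ((-2*t - F (r t - ε'))/2) (min ((F (r t + ε') - (-2*t))/2) (-t/2)),
      lt_min (by linarith) (lt_min (by linarith) (by linarith)), ?_⟩
    intro y hy
    rw [Real.dist_eq] at hy ⊢
    have hb1 : |y - t| < (-2*t - F (r t - ε'))/2 := lt_of_lt_of_le hy (min_le_left _ _)
    have hb2 : |y - t| < (F (r t + ε') - (-2*t))/2 :=
      lt_of_lt_of_le hy (le_trans (min_le_right _ _) (min_le_left _ _))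
    have hb3 : |y - t| < -t/2 := lt_of_lt_of_le hy (le_trans (min_le_right _ _) (min_le_right _ _))
    have hy3 := abs_lt.1 hb3
    have hyneg : y < 0 := by linarith [hy3.2]
    obtain ⟨hry, hsumy⟩ := hr y hyneg
    have hFy : F (r y) = -2*y := hsumy
    have hy1 := abs_lt.1 hb1
    have hy2 := abs_lt.1 hb2
    have hup : F (r y) < F (r t + ε') := by rw [hFy]; linarith [hy2.2]
    have hlo : F (r t - ε') < F (r y) := by rw [hFy]; linarith [hy1.1]
    have hA : r y < r t + ε' := by
      by_contra hcon
      push_neg at hcon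
      exact absurd (hFmono.monotoneOn (by simp; linarith) (by simp [le_of_lt hry]) hcon)
        (not_le.2 hup)
    have hB : r t - ε' < r y := by
      by_contra hcon
      push_neg at hcon
      exact absurd (hFmono.monotoneOn (by simp [le_of_lt hry]) (by simpa using h1) hcon)
        (not_le.2 hlo)
    have : |r y - r t| < ε' := abs_lt.2 ⟨by linarith, by linarith⟩
    exact lt_of_lt_of_le this (min_le_left _ _)
  -- derivative of the inverse function
  have hFd : HasDerivAt (fun ρ => -(F ρ)/2)
      (-(∑ j : Fin m, ((2*(k j)^2 : ℕ) : ℝ) * (r t)^(2*(k j)^2 - 1))/2) (r t) := by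
    have : HasDerivAt F (∑ j : Fin m, ((2*(k j)^2 : ℕ) : ℝ) * (r t)^(2*(k j)^2-1)) (r t) :=
      HasDerivAt.fun_sum fun j _ => hasDerivAt_pow _ _
    exact this.neg.div_const 2
  have hDpos : 0 < ∑ j : Fin m, (k j : ℝ)^2 * (r t) ^ (2*(k j)^2 - 1) := by
    apply Finset.sum_pos _ Finset.univ_nonempty
    intro j _
    have := hkpos j
    positivity
  have hcast : ∑ j : Fin m, ((2*(k j)^2 : ℕ) : ℝ) * (r t)^(2*(k j)^2-1)
      = 2 * ∑ j : Fin m, (k j : ℝ)^2 * (r t) ^ (2*(k j)^2 - 1) := by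
    rw [Finset.mul_sum]
    refine Finset.sum_congr rfl fun j _ => ?_
    push_cast
    ring
  have hne : -(∑ j : Fin m, ((2*(k j)^2 : ℕ) : ℝ) * (r t)^(2*(k j)^2-1))/2 ≠ 0 := by
    rw [hcast]
    intro h
    nlinarith
  have hfg : ∀ᶠ y in 𝓝 t, -(F (r y))/2 = y := by
    filter_upwards [Iio_mem_nhds ht] with y hy
    have h2 := (hr y hy).2
    have : F (r y) = -2 * y := h2
    rw [this]; ring
  have hmain := HasDerivAt.of_local_left_inverse hcont hFd hne hfg
  refine hmain.congr_deriv ?_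
  rw [hcast]
  have h2 : -(2 * ∑ j : Fin m, (k j : ℝ)^2 * (r t) ^ (2*(k j)^2 - 1))/2
      = -(∑ j : Fin m, (k j : ℝ)^2 * (r t) ^ (2*(k j)^2 - 1)) := by ring
  rw [h2, inv_neg]

/-- The torus curve `γ : ℝ × (-∞,0) → ℝ^{2m}` (here `ℝ^{2m}` is modeled as the
Euclidean space on `Fin m × Fin 2`, the `j`-th pair of coordinates being
`r(t)^(k_j²) (cos (k_j θ), sin (k_j θ))`) satisfies, for every `θ` and `t < 0`:
(i) `|∂_θ γ|² = ∑_j k_j² r(t)^(2 k_j²)` (in particular `∂_θ γ ≠ 0`);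
(ii) `⟨∂_θ² γ, ∂_θ γ⟩ = 0`;
(iii) `∂_t γ = ∂_θ² γ / |∂_θ γ|²`.
Hence `γ` is an ancient solution of the curve shortening flow. -/
theorem torus_curve_is_curve_shortening_flow (m : ℕ) (hm : 1 ≤ m) (k : Fin m → ℕ)
    (hkpos : ∀ j, 0 < k j) (hkmono : StrictMono k)
    (r : ℝ → ℝ)
    (hr : ∀ t < (0:ℝ), 0 < r t ∧ ∑ j : Fin m, (r t) ^ (2 * (k j) ^ 2) = -2 * t)
    (γ : ℝ → ℝ → EuclideanSpace ℝ (Fin m × Fin 2))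
    (hγ : ∀ (θ t : ℝ) (j : Fin m),
      γ θ t (j, 0) = (r t) ^ ((k j) ^ 2) * Real.cos (k j * θ) ∧
      γ θ t (j, 1) = (r t) ^ ((k j) ^ 2) * Real.sin (k j * θ))
    (θ t : ℝ) (ht : t < 0) :
    (‖deriv (fun θ' => γ θ' t) θ‖ ^ 2
        = ∑ j : Fin m, (k j : ℝ) ^ 2 * (r t) ^ (2 * (k j) ^ 2)
      ∧ deriv (fun θ' => γ θ' t) θ ≠ 0)
    ∧ inner ℝ (deriv (fun θ' => deriv (fun θ'' => γ θ'' t) θ') θ)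
        (deriv (fun θ' => γ θ' t) θ) = (0 : ℝ)
    ∧ deriv (fun s => γ θ s) t
        = (‖deriv (fun θ' => γ θ' t) θ‖ ^ 2)⁻¹ •
            deriv (fun θ' => deriv (fun θ'' => γ θ'' t) θ') θ := by
  haveI : Nonempty (Fin m) := ⟨⟨0, hm⟩⟩
  obtain ⟨hρ0, hsum⟩ := hr t ht
  set rd : ℝ := -(∑ j : Fin m, (k j : ℝ)^2 * (r t) ^ (2*(k j)^2 - 1))⁻¹ with hrd_def
  set V1 : ℝ → EuclideanSpace ℝ (Fin m × Fin 2) := fun a => WithLp.toLp 2 (fun p : Fin m × Fin 2 =>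
    ![r t ^ (k p.1)^2 * (-Real.sin (k p.1 * a) * k p.1),
      r t ^ (k p.1)^2 * (Real.cos (k p.1 * a) * k p.1)] p.2) with hV1
  set V2 : EuclideanSpace ℝ (Fin m × Fin 2) := WithLp.toLp 2 (fun p : Fin m × Fin 2 =>
    ![r t ^ (k p.1)^2 * (-(Real.cos (k p.1 * θ) * k p.1) * k p.1),
      r t ^ (k p.1)^2 * (-Real.sin (k p.1 * θ) * k p.1 * k p.1)] p.2) with hV2
  set V3 : EuclideanSpace ℝ (Fin m × Fin 2) := WithLp.toLp 2 (fun p : Fin m × Fin 2 =>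
    ![↑((k p.1)^2) * r t ^ ((k p.1)^2 - 1) * rd * Real.cos (k p.1 * θ),
      ↑((k p.1)^2) * r t ^ ((k p.1)^2 - 1) * rd * Real.sin (k p.1 * θ)] p.2) with hV3
  have hlin : ∀ (j : Fin m) (a : ℝ), HasDerivAt (fun θ' : ℝ => (k j : ℝ) * θ') (k j) a := by
    intro j a
    simpa using (hasDerivAt_id a).const_mul (k j : ℝ)
  -- first θ-derivative
  have hd1 : ∀ a : ℝ, HasDerivAt (fun θ' => γ θ' t) (V1 a) a := by
    intro a
    apply hasDerivAt_euclidean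
    rintro ⟨j, i⟩
    fin_cases i
    · exact (((hlin j a).cos).const_mul (r t ^ (k j)^2)).congr_of_eventuallyEq
        (Filter.Eventually.of_forall fun θ' => (hγ θ' t j).1)
    · exact (((hlin j a).sin).const_mul (r t ^ (k j)^2)).congr_of_eventuallyEq
        (Filter.Eventually.of_forall fun θ' => (hγ θ' t j).2)
  -- second θ-derivative
  have hd2 : HasDerivAt V1 V2 θ := by
    apply hasDerivAt_euclidean
    rintro ⟨j, i⟩
    fin_cases i
    · exact ((((hlin j θ).sin).neg.mul_const ((k j : ℝ))).const_mul
        (r t ^ (k j)^2)).congr_of_eventuallyEq (Filter.Eventually.of_forall fun a => rfl)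
    · exact ((((hlin j θ).cos).mul_const ((k j : ℝ))).const_mul
        (r t ^ (k j)^2)).congr_of_eventuallyEq (Filter.Eventually.of_forall fun a => rfl)
  -- t-derivative
  have hrder : HasDerivAt r rd t := torus_r_hasDerivAt m hm k hkpos r hr t ht
  have hd3 : HasDerivAt (fun s => γ θ s) V3 t := by
    apply hasDerivAt_euclidean
    rintro ⟨j, i⟩
    fin_cases i
    · exact ((hrder.pow ((k j)^2)).mul_const (Real.cos ((k j : ℝ) * θ))).congr_of_eventuallyEq
        (Filter.Eventually.of_forall fun s => (hγ θ s j).1)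
    · exact ((hrder.pow ((k j)^2)).mul_const (Real.sin ((k j : ℝ) * θ))).congr_of_eventuallyEq
        (Filter.Eventually.of_forall fun s => (hγ θ s j).2)
  have hD1 : deriv (fun θ' => γ θ' t) θ = V1 θ := (hd1 θ).deriv
  have hD2 : deriv (fun θ' => deriv (fun θ'' => γ θ'' t) θ') θ = V2 := by
    have hfun : (fun θ' => deriv (fun θ'' => γ θ'' t) θ') = V1 := funext fun a => (hd1 a).deriv
    rw [hfun]
    exact hd2.deriv
  have hD3 : deriv (fun s => γ θ s) t = V3 := hd3.deriv
  -- norm computation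
  have hnormsq : ‖deriv (fun θ' => γ θ' t) θ‖ ^ 2
      = ∑ j : Fin m, (k j : ℝ) ^ 2 * (r t) ^ (2 * (k j) ^ 2) := by
    rw [hD1, ← real_inner_self_eq_norm_sq, PiLp.inner_apply]
    simp only [RCLike.inner_apply, conj_trivial]
    rw [Fintype.sum_prod_type]
    refine Finset.sum_congr rfl fun j _ => ?_
    rw [Fin.sum_univ_two]
    simp only [hV1, PiLp.toLp_apply, Matrix.cons_val_zero, Matrix.cons_val_one, Matrix.head_cons]
    have hrw : r t ^ (2*(k j)^2) = (r t ^ ((k j)^2))^2 := by rw [mul_comm 2, pow_mul]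
    rw [hrw]
    have hpy := Real.sin_sq_add_cos_sq ((k j : ℝ) * θ)
    linear_combination (r t ^ ((k j)^2))^2 * ((k j : ℝ))^2 * hpy
  have hSpos : 0 < ∑ j : Fin m, (k j : ℝ) ^ 2 * (r t) ^ (2 * (k j) ^ 2) := by
    apply Finset.sum_pos _ Finset.univ_nonempty
    intro j _
    have := hkpos j
    positivity
  have hne : deriv (fun θ' => γ θ' t) θ ≠ 0 := by
    intro h0
    rw [h0, norm_zero] at hnormsq
    simp at hnormsq
    linarith
  refine ⟨⟨hnormsq, hne⟩, ?_, ?_⟩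
  · rw [hD2, hD1, PiLp.inner_apply]
    simp only [RCLike.inner_apply, conj_trivial]
    rw [Fintype.sum_prod_type]
    apply Finset.sum_eq_zero
    intro j _
    rw [Fin.sum_univ_two]
    simp only [hV1, hV2, PiLp.toLp_apply, Matrix.cons_val_zero, Matrix.cons_val_one, Matrix.head_cons]
    ring
  · rw [hD3, hD2, hnormsq]
    have hDpos : 0 < ∑ j : Fin m, (k j : ℝ)^2 * (r t) ^ (2*(k j)^2 - 1) := by
      apply Finset.sum_pos _ Finset.univ_nonempty
      intro j _
      have := hkpos j
      positivity
    have hSD : ∑ j : Fin m, (k j : ℝ) ^ 2 * (r t) ^ (2 * (k j) ^ 2)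
        = r t * ∑ j : Fin m, (k j : ℝ)^2 * (r t) ^ (2*(k j)^2 - 1) := by
      rw [Finset.mul_sum]
      refine Finset.sum_congr rfl fun j _ => ?_
      have h1 : 2*(k j)^2 - 1 + 1 = 2*(k j)^2 :=
        Nat.succ_pred_eq_of_pos (Nat.mul_pos two_pos (pow_pos (hkpos j) 2))
      calc (k j : ℝ)^2 * r t ^ (2*(k j)^2)
          = (k j : ℝ)^2 * r t ^ (2*(k j)^2 - 1 + 1) := by rw [h1]
        _ = r t * ((k j : ℝ)^2 * r t ^ (2*(k j)^2 - 1)) := by rw [pow_succ]; ring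
    ext p
    obtain ⟨j, i⟩ := p
    have hk1 : (k j)^2 - 1 + 1 = (k j)^2 :=
      Nat.succ_pred_eq_of_pos (pow_pos (hkpos j) 2)
    have hPow : r t ^ ((k j)^2) = r t ^ ((k j)^2 - 1) * r t := by rw [← pow_succ, hk1]
    have hDne : (∑ j : Fin m, (k j : ℝ)^2 * (r t) ^ (2*(k j)^2 - 1)) ≠ 0 := ne_of_gt hDpos
    have hrne : r t ≠ 0 := ne_of_gt hρ0
    fin_cases i
    · simp only [PiLp.smul_apply, smul_eq_mul, hV3, hV2, PiLp.toLp_apply, hSD, hrd_def]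
      simp only [Fin.zero_eta, Fin.isValue, Matrix.cons_val_zero]
      push_cast
      rw [hPow]
      field_simp
    · simp only [PiLp.smul_apply, smul_eq_mul, hV3, hV2, PiLp.toLp_apply, hSD, hrd_def]
      simp only [Fin.mk_one, Fin.isValue, Matrix.cons_val_one, Matrix.head_cons]
      push_cast
      rw [hPow]
      field_simp
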